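/- If D[i,j] = 1 in the DTW table with integer letter distances, then either P[i] = T[j] (so (i,j) lies in a homogeneous block all of whose values equal 1), or P[i] ≠ T[j] and there exists a cost-realizing path to (i,j) whose every cell except (i,j) has value 0 and satisfies P[i'] = T[j']. -/

import Mathlib

open scoped ENNReal

def isStep (p q : ℕ × ℕ) : Prop :=
  (q.1 = p.1 + 1 ∧ q.2 = p.2) ∨ (q.1 = p.1 ∧ q.2 = p.2 + 1) ∨
    (q.1 = p.1 + 1 ∧ q.2 = p.2 + 1)

/-- A monotone staircase path in the DTW table starting at some cell `(1, j₀)` of the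
first row and ending at `(i, j)`. -/
def IsTablePath (i j : ℕ) (π : List (ℕ × ℕ)) : Prop :=
  π ≠ [] ∧ (∃ j0, 1 ≤ j0 ∧ π.head? = some (1, j0)) ∧
    π.getLast? = some (i, j) ∧ π.Chain' isStep

section Aux
variable {α : Type*} (d : α → α → ℝ≥0∞) (P T : ℕ → α) (D : ℕ → ℕ → ℝ≥0∞)

def isWStep (p q : ℕ × ℕ) : Prop := isStep p q ∨ q = p

/-- Integrality of the table. -/
lemma Dnat (hint : ∀ a b, ∃ n : ℕ, d a b = n)
    (hD0 : ∀ j, D 0 j = 0) (hDi0 : ∀ i, 1 ≤ i → D i 0 = ⊤)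
    (hrec : ∀ i j, 1 ≤ i → 1 ≤ j →
      D i j = min (min (D (i - 1) (j - 1)) (D (i - 1) j)) (D i (j - 1))
        + d (P i) (T j)) :
    ∀ s i j, i + j ≤ s → D i j = ⊤ ∨ ∃ n : ℕ, D i j = n := by
  intro s
  induction s with
  | zero =>
    intro i j hs
    have hi : i = 0 := by omega
    exact Or.inr ⟨0, by simp [hi, hD0]⟩
  | succ s IH =>
    intro i j hs
    rcases Nat.eq_zero_or_pos i with hi | hi
    · exact Or.inr ⟨0, by simp [hi, hD0]⟩
    rcases Nat.eq_zero_or_pos j with hj | hj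
    · exact Or.inl (by rw [hj]; exact hDi0 i hi)
    have h1 := IH (i-1) (j-1) (by omega)
    have h2 := IH (i-1) j (by omega)
    have h3 := IH i (j-1) (by omega)
    have hm : ∀ x y : ℝ≥0∞, (x = ⊤ ∨ ∃ n : ℕ, x = n) → (y = ⊤ ∨ ∃ n : ℕ, y = n) →
        (min x y = ⊤ ∨ ∃ n : ℕ, min x y = n) := by
      intro x y hx hy
      rcases min_choice x y with h | h <;> rw [h] <;> assumption
    have hmin := hm _ _ (hm _ _ h1 h2) h3
    rw [hrec i j hi hj]
    obtain ⟨k, hk⟩ := hint (P i) (T j)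
    rcases hmin with h | ⟨n, hn⟩
    · rw [h, hk]; exact Or.inl (top_add _)
    · rw [hn, hk]
      exact Or.inr ⟨n + k, by push_cast; ring⟩

lemma match_of_zero (hd1 : ∀ a b, a ≠ b → 1 ≤ d a b)
    (hrec : ∀ i j, 1 ≤ i → 1 ≤ j →
      D i j = min (min (D (i - 1) (j - 1)) (D (i - 1) j)) (D i (j - 1))
        + d (P i) (T j))
    {x y : ℕ} (hx : 1 ≤ x) (hy : 1 ≤ y) (h0 : D x y = 0) : P x = T y := by
  by_contra h
  have h1 := hd1 _ _ h
  have := hrec x y hx hy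
  rw [h0] at this
  have : (1:ℝ≥0∞) ≤ 0 := by
    calc (1:ℝ≥0∞) ≤ d (P x) (T y) := h1
    _ ≤ min (min (D (x - 1) (y - 1)) (D (x - 1) y)) (D x (y - 1)) + d (P x) (T y) := le_add_self
    _ = 0 := this.symm
  simp at this

/-- monotone decrease within a zero-cost block -/
lemma Dmono
    (hrec : ∀ i j, 1 ≤ i → 1 ≤ j →
      D i j = min (min (D (i - 1) (j - 1)) (D (i - 1) j)) (D i (j - 1))
        + d (P i) (T j))
    {ip jp it jt : ℕ} (hip : 1 ≤ ip) (hit : 1 ≤ it)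
    (hz : ∀ x y, ip ≤ x → x ≤ jp → it ≤ y → y ≤ jt → d (P x) (T y) = 0) :
    ∀ a b a' b', ip ≤ a' → a' ≤ a → a ≤ jp → it ≤ b' → b' ≤ b → b ≤ jt →
      D a b ≤ D a' b' := by
  have key : ∀ a b, ip ≤ a → a ≤ jp → it ≤ b → b ≤ jt →
      D a b ≤ D (a-1) b ∧ D a b ≤ D a (b-1) := by
    intro a b h1 h2 h3 h4
    have hrw := hrec a b (le_trans hip h1) (le_trans hit h3)
    rw [hz a b h1 h2 h3 h4, add_zero] at hrw
    constructor
    · rw [hrw]; exact le_trans (min_le_left _ _) (min_le_right _ _)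
    · rw [hrw]; exact min_le_right _ _
  intro a b a' b' h1 h2 h3 h4 h5 h6
  have col : ∀ x, a' ≤ x → x ≤ jp → D x b ≤ D a' b := by
    intro x hx
    induction x, hx using Nat.le_induction with
    | base => intro _; exact le_refl _
    | succ x hx IH =>
      intro hxjp
      have := (key (x+1) b (by omega) hxjp (h4.trans h5) h6).1
      simp only [Nat.add_sub_cancel] at this
      exact le_trans this (IH (by omega))
  have row : ∀ y, b' ≤ y → y ≤ jt → D a' y ≤ D a' b' := by
    intro y hy
    induction y, hy using Nat.le_induction with
    | base => intro _; exact le_refl _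
    | succ y hy IH =>
      intro hyjt
      have := (key a' (y+1) h1 (h2.trans h3) (by omega) hyjt).2
      simp only [Nat.add_sub_cancel] at this
      exact le_trans this (IH (by omega))
  exact le_trans (col a h2 h3) (row b h5 h6)

/-- upper bound along weak staircase paths, plus coordinate bounds -/
lemma weak_ub (hD0 : ∀ j, D 0 j = 0)
    (hrec : ∀ i j, 1 ≤ i → 1 ≤ j →
      D i j = min (min (D (i - 1) (j - 1)) (D (i - 1) j)) (D i (j - 1))
        + d (P i) (T j)) :
    ∀ (π : List (ℕ × ℕ)) (i j : ℕ), (∃ j0, 1 ≤ j0 ∧ π.head? = some (1, j0)) →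
      π.getLast? = some (i, j) → π.Chain' isWStep →
      1 ≤ i ∧ 1 ≤ j ∧ D i j ≤ (π.map (fun p => d (P p.1) (T p.2))).sum ∧
        ∀ p ∈ π, 1 ≤ p.1 ∧ p.1 ≤ i ∧ 1 ≤ p.2 ∧ p.2 ≤ j := by
  intro π
  induction π using List.reverseRecOn with
  | nil => intro i j hh hl; simp at hl
  | append_singleton σ p IH =>
    intro i j hhead hlast hchain
    have hp : p = (i, j) := by
      rw [List.getLast?_concat] at hlast; exact Option.some.inj hlast
    subst hp
    cases σ with
    | nil =>
      obtain ⟨j0, hj0, hh⟩ := hhead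
      simp at hh
      obtain ⟨h1, h2⟩ := hh
      subst h1 h2
      have hd1j : D 1 j ≤ d (P 1) (T j) := by
        rw [hrec 1 j le_rfl hj0]
        have : min (min (D (1-1) (j-1)) (D (1-1) j)) (D 1 (j-1)) ≤ 0 := by
          refine le_trans (le_trans (min_le_left _ _) (min_le_right _ _)) ?_
          simp [hD0]
        calc _ ≤ 0 + d (P 1) (T j) := add_le_add_left this _
        _ = _ := zero_add _
      refine ⟨le_rfl, hj0, by simpa using hd1j, ?_⟩
      intro p hp
      simp at hp
      subst hp
      exact ⟨le_rfl, le_rfl, hj0, le_rfl⟩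
    | cons hd tl =>
      set σ := hd :: tl with hσ
      have hσne : σ ≠ [] := by simp [hσ]
      set q := σ.getLast hσne with hq
      rw [List.Chain', List.isChain_append] at hchain
      obtain ⟨hc1, _, hc3⟩ := hchain
      have hstep : isWStep q (i, j) := by
        refine hc3 q ?_ (i,j) (by simp)
        rw [List.getLast?_eq_getLast hσne]; simp [hq]
      obtain ⟨j0, hj0, hh⟩ := hhead
      have hh' : σ.head? = some (1, j0) := by
        rw [List.head?_append] at hh
        simpa [hσ] using hh
      obtain ⟨hq1, hq2, hDq, hbnd⟩ := IH q.1 q.2 ⟨j0, hj0, hh'⟩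
        (by rw [List.getLast?_eq_getLast hσne]) hc1
      have hkey : 1 ≤ i ∧ 1 ≤ j ∧ q.1 ≤ i ∧ q.2 ≤ j ∧
          D i j ≤ D q.1 q.2 + d (P i) (T j) := by
        rcases hstep with (⟨e1, e2⟩ | ⟨e1, e2⟩ | ⟨e1, e2⟩) | heq
        · simp only at e1 e2
          refine ⟨by omega, by omega, by omega, by omega, ?_⟩
          rw [hrec i j (by omega) (by omega)]
          refine add_le_add_left ?_ _
          refine le_trans (le_trans (min_le_left _ _) (min_le_right _ _)) ?_
          have : i - 1 = q.1 := by omega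
          rw [this, e2]
        · simp only at e1 e2
          refine ⟨by omega, by omega, by omega, by omega, ?_⟩
          rw [hrec i j (by omega) (by omega)]
          refine add_le_add_left ?_ _
          refine le_trans (min_le_right _ _) ?_
          have : j - 1 = q.2 := by omega
          rw [this, e1]
        · simp only at e1 e2
          refine ⟨by omega, by omega, by omega, by omega, ?_⟩
          rw [hrec i j (by omega) (by omega)]
          refine add_le_add_left ?_ _
          refine le_trans (le_trans (min_le_left _ _) (min_le_left _ _)) ?_
          have h1 : i - 1 = q.1 := by omega
          have h2 : j - 1 = q.2 := by omega
          rw [h1, h2]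
        · have e1 : i = q.1 := by rw [← heq]
          have e2 : j = q.2 := by rw [← heq]
          refine ⟨by omega, by omega, by omega, by omega, ?_⟩
          rw [e1, e2]
          exact le_self_add
      obtain ⟨hi1, hj1, hqi, hqj, hDle⟩ := hkey
      refine ⟨hi1, hj1, ?_, ?_⟩
      · rw [List.map_append, List.sum_append]
        simp only [List.map_cons, List.map_nil, List.sum_cons, List.sum_nil, add_zero]
        exact le_trans hDle (add_le_add_left hDq _)
      · intro p hp
        rw [List.mem_append] at hp
        rcases hp with hp | hp
        · obtain ⟨b1, b2, b3, b4⟩ := hbnd p hp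
          exact ⟨b1, by omega, b3, by omega⟩
        · simp at hp
          subst hp
          exact ⟨hi1, le_rfl, hj1, le_rfl⟩

/-- a realizing path exists whenever the value is finite -/
lemma exists_path (hD0 : ∀ j, D 0 j = 0) (hDi0 : ∀ i, 1 ≤ i → D i 0 = ⊤)
    (hrec : ∀ i j, 1 ≤ i → 1 ≤ j →
      D i j = min (min (D (i - 1) (j - 1)) (D (i - 1) j)) (D i (j - 1))
        + d (P i) (T j)) :
    ∀ s a b, a + b ≤ s → 1 ≤ a → 1 ≤ b → D a b ≠ ⊤ →
      ∃ π, IsTablePath a b π ∧ (π.map (fun p => d (P p.1) (T p.2))).sum = D a b ∧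
        ∀ p ∈ π, D p.1 p.2 ≤ D a b := by
  intro s
  induction s with
  | zero => intro a b hs ha; omega
  | succ s IH =>
    intro a b hs ha hb hfin
    have hrw := hrec a b ha hb
    rcases Nat.lt_or_ge a 2 with ha2 | ha2
    · -- a = 1
      have ha1 : a = 1 := by omega
      subst ha1
      have hmin : min (min (D (1-1) (b-1)) (D (1-1) b)) (D 1 (b-1)) = 0 := by
        refine le_antisymm ?_ zero_le
        refine le_trans (le_trans (min_le_left _ _) (min_le_left _ _)) ?_
        simp [hD0]
      rw [hmin, zero_add] at hrw
      refine ⟨[(1, b)], ⟨by simp, ⟨b, hb, by simp⟩, by simp, by simp [List.Chain']⟩, ?_, ?_⟩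
      · simp [hrw]
      · intro p hp; simp at hp; subst hp; exact le_rfl
    · -- a ≥ 2 : find a predecessor achieving the min
      set m3 := min (min (D (a-1) (b-1)) (D (a-1) b)) (D a (b-1)) with hm3
      have hm3fin : m3 ≠ ⊤ := by
        intro h; rw [h, top_add] at hrw; exact hfin hrw
      have hchoice : (D (a-1) (b-1) = m3 ∧ isStep (a-1, b-1) (a,b)) ∨
          (D (a-1) b = m3 ∧ isStep (a-1, b) (a,b)) ∨
          (D a (b-1) = m3 ∧ isStep (a, b-1) (a,b)) := by
        rcases min_choice (min (D (a-1) (b-1)) (D (a-1) b)) (D a (b-1)) with h | h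
        · rcases min_choice (D (a-1) (b-1)) (D (a-1) b) with h' | h'
          · refine Or.inl ⟨by rw [hm3]; exact (h.trans h').symm,
              Or.inr (Or.inr ⟨?_, ?_⟩)⟩
            · show a = (a-1) + 1; omega
            · show b = (b-1) + 1; omega
          · refine Or.inr (Or.inl ⟨by rw [hm3]; exact (h.trans h').symm,
              Or.inl ⟨?_, ?_⟩⟩)
            · show a = (a-1) + 1; omega
            · show b = b; rfl
        · refine Or.inr (Or.inr ⟨by rw [hm3]; exact h.symm,
            Or.inr (Or.inl ⟨?_, ?_⟩)⟩)
          · show a = a; rfl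
          · show b = (b-1) + 1; omega
      obtain ⟨x, y, hxy, hstep, hx1, hy0, hxysum⟩ :
          ∃ x y, D x y = m3 ∧ isStep (x, y) (a, b) ∧ 1 ≤ x ∧ (y = b - 1 ∨ y = b) ∧
            x + y < a + b := by
        rcases hchoice with ⟨h1, h2⟩ | ⟨h1, h2⟩ | ⟨h1, h2⟩
        · exact ⟨a-1, b-1, h1, h2, by omega, Or.inl rfl, by omega⟩
        · exact ⟨a-1, b, h1, h2, by omega, Or.inr rfl, by omega⟩
        · exact ⟨a, b-1, h1, h2, by omega, Or.inl rfl, by omega⟩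
      have hy1 : 1 ≤ y := by
        by_contra h
        have hy : y = 0 := by omega
        rw [hy, hDi0 x hx1] at hxy
        exact hm3fin hxy.symm
      obtain ⟨π₀, ⟨hne, hhead, hlast, hchain⟩, hsum, hcells⟩ :=
        IH x y (by omega) hx1 hy1 (by rw [hxy]; exact hm3fin)
      refine ⟨π₀ ++ [(a, b)], ⟨by simp, ?_, ?_, ?_⟩, ?_, ?_⟩
      · obtain ⟨j0, hj0, hh⟩ := hhead
        refine ⟨j0, hj0, ?_⟩
        rw [List.head?_append, hh]; rfl
      · exact List.getLast?_concat
      · rw [List.Chain', List.isChain_append]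
        refine ⟨hchain, by simp, ?_⟩
        intro u hu v hv
        simp at hv
        rw [hlast] at hu
        simp at hu
        subst hu hv
        exact hstep
      · rw [List.map_append, List.sum_append]
        simp only [List.map_cons, List.map_nil, List.sum_cons, List.sum_nil, add_zero]
        rw [hsum, hxy, hrw]
      · intro p hp
        rw [List.mem_append] at hp
        rcases hp with hp | hp
        · refine le_trans (hcells p hp) ?_
          rw [hxy, hrw]
          exact le_self_add
        · simp at hp; subst hp; exact le_rfl

/-- clamping a weak path and bounding the value at the clamped endpoint -/
lemma clamp_path (hD0 : ∀ j, D 0 j = 0)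
    (hrec : ∀ i j, 1 ≤ i → 1 ≤ j →
      D i j = min (min (D (i - 1) (j - 1)) (D (i - 1) j)) (D i (j - 1))
        + d (P i) (T j))
    (π : List (ℕ × ℕ)) (i j a0 b0 : ℕ)
    (ha0 : 1 ≤ a0) (hb0 : 1 ≤ b0) (ha0i : a0 ≤ i) (hb0j : b0 ≤ j)
    (hhead : ∃ j0, 1 ≤ j0 ∧ π.head? = some (1, j0)) (hlast : π.getLast? = some (i, j))
    (hchain : π.Chain' isWStep)
    (hcost : ∀ p ∈ π, d (P (min p.1 a0)) (T (min p.2 b0)) = d (P p.1) (T p.2)) :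
    D a0 b0 ≤ (π.map (fun p => d (P p.1) (T p.2))).sum := by
  set c : ℕ × ℕ → ℕ × ℕ := fun p => (min p.1 a0, min p.2 b0) with hc
  obtain ⟨j0, hj0, hh⟩ := hhead
  have hhead' : (π.map c).head? = some (1, min j0 b0) := by
    rw [List.head?_map, hh]
    simp [hc, Nat.min_eq_left ha0]
  have hlast' : (π.map c).getLast? = some (a0, b0) := by
    rw [List.getLast?_map, hlast]
    simp [hc, Nat.min_eq_right ha0i, Nat.min_eq_right hb0j]
  have hchain' : (π.map c).Chain' isWStep := by
    rw [List.Chain', List.isChain_map]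
    refine hchain.imp ?_
    intro p q hpq
    show isWStep (c p) (c q)
    rcases hpq with hst | heq
    · rcases hst with ⟨e1, e2⟩ | ⟨e1, e2⟩ | ⟨e1, e2⟩ <;>
      · simp only [isWStep, isStep, hc, Prod.mk.injEq]
        omega
    · rw [heq]; exact Or.inr rfl
  have := weak_ub d P T D hD0 hrec (π.map c) a0 b0
    ⟨min j0 b0, le_min hj0 hb0, hhead'⟩ hlast' hchain'
  refine le_trans this.2.2.1 (le_of_eq ?_)
  rw [List.map_map]
  congr 1
  refine List.map_congr_left ?_
  intro p hp
  exact hcost p hp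

end Aux

/-- with integer letter distances, if `D[i,j] = 1` then either
`P[i] = T[j]` (and then every homogeneous block-rectangle containing `(i,j)` has all
its values equal to 1), or `P[i] ≠ T[j]` and some cost-realizing path to `(i,j)` has
all its cells except `(i,j)` matching and zero-valued. -/
theorem one_cell_structure {α : Type*} (d : α → α → ℝ≥0∞) (P T : ℕ → α)
    (hint : ∀ a b, ∃ n : ℕ, d a b = n)
    (hrefl : ∀ a, d a a = 0) (hd1 : ∀ a b, a ≠ b → 1 ≤ d a b)
    (D : ℕ → ℕ → ℝ≥0∞)
    (hD0 : ∀ j, D 0 j = 0) (hDi0 : ∀ i, 1 ≤ i → D i 0 = ⊤)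
    (hrec : ∀ i j, 1 ≤ i → 1 ≤ j →
      D i j = min (min (D (i - 1) (j - 1)) (D (i - 1) j)) (D i (j - 1))
        + d (P i) (T j))
    (i j : ℕ) (hi : 1 ≤ i) (hj : 1 ≤ j) (hone : D i j = 1) :
    (P i = T j ∧
      ∀ ip jp it jt, 1 ≤ ip → ip ≤ i → i ≤ jp → 1 ≤ it → it ≤ j → j ≤ jt →
        (∀ x, ip ≤ x → x ≤ jp → P x = P i) → (∀ y, it ≤ y → y ≤ jt → T y = T j) →
        ∀ a b, ip ≤ a → a ≤ jp → it ≤ b → b ≤ jt → D a b = 1) ∨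
    (P i ≠ T j ∧
      ∃ π, IsTablePath i j π ∧
        D i j = (π.map (fun p => d (P p.1) (T p.2))).sum ∧
        ∀ p ∈ π, p ≠ (i, j) → D p.1 p.2 = 0 ∧ P p.1 = T p.2) := by
  by_cases hm : P i = T j
  · -- block case
    left
    refine ⟨hm, ?_⟩
    intro ip jp it jt hip1 hipi hijp hit1 hitj hjjt hPc hTc a b hipa hajp hitb hbjt
    have hz : ∀ x y, ip ≤ x → x ≤ jp → it ≤ y → y ≤ jt → d (P x) (T y) = 0 := by
      intro x y h1 h2 h3 h4
      rw [hPc x h1 h2, hTc y h3 h4, hm, hrefl]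
    -- upper bound : D a b ≤ 1
    have hub : D a b ≤ 1 := by
      obtain ⟨π, ⟨hne, hhead, hlast, hchain⟩, hsum, hcells⟩ :=
        exists_path d P T D hD0 hDi0 hrec (i+j) i j le_rfl hi hj
          (by rw [hone]; exact ENNReal.one_ne_top)
      have hwchain : π.Chain' isWStep := hchain.imp (fun _ _ h => Or.inl h)
      have hbnd := (weak_ub d P T D hD0 hrec π i j hhead hlast hwchain).2.2.2
      set a0 := min a i with ha0def
      set b0 := min b j with hb0def
      have hcost : ∀ p ∈ π, d (P (min p.1 a0)) (T (min p.2 b0)) = d (P p.1) (T p.2) := by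
        intro p hp
        obtain ⟨hp1, hp2, hp3, hp4⟩ := hbnd p hp
        have e1 : P (min p.1 a0) = P p.1 := by
          rcases le_or_gt p.1 a0 with h | h
          · rw [Nat.min_eq_left h]
          · rw [Nat.min_eq_right h.le]
            have ha0a : a0 = a := by omega
            rw [hPc a0 (by omega) (by omega), hPc p.1 (by omega) (by omega)]
        have e2 : T (min p.2 b0) = T p.2 := by
          rcases le_or_gt p.2 b0 with h | h
          · rw [Nat.min_eq_left h]
          · rw [Nat.min_eq_right h.le]
            have hb0b : b0 = b := by omega
            rw [hTc b0 (by omega) (by omega), hTc p.2 (by omega) (by omega)]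
        rw [e1, e2]
      have h1 : D a0 b0 ≤ 1 := by
        have := clamp_path d P T D hD0 hrec π i j a0 b0
          (le_min (le_trans hip1 hipa) hi) (le_min (le_trans hit1 hitb) hj)
          (min_le_right _ _) (min_le_right _ _) hhead hlast hwchain hcost
        rw [hsum, hone] at this
        exact this
      refine le_trans ?_ h1
      exact Dmono d P T D hrec hip1 hit1 hz a b a0 b0
        (le_min hipa hipi) (min_le_left _ _) hajp
        (le_min hitb hitj) (min_le_left _ _) hbjt
    -- lower bound : D a b ≠ 0
    have hnz : D a b ≠ 0 := by
      intro h0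
      set a1 := max a i with ha1def
      set b1 := max b j with hb1def
      have hz1 : D a1 b1 = 0 := by
        have := Dmono d P T D hrec hip1 hit1 hz a1 b1 a b hipa
          (le_max_left _ _) (max_le hajp hijp) hitb (le_max_left _ _) (max_le hbjt hjjt)
        rw [h0] at this
        exact le_bot_iff.mp this
      obtain ⟨π, ⟨hne, hhead, hlast, hchain⟩, hsum, hcells⟩ :=
        exists_path d P T D hD0 hDi0 hrec (a1+b1) a1 b1 le_rfl
          (le_trans hi (le_max_right _ _)) (le_trans hj (le_max_right _ _))
          (by rw [hz1]; exact ENNReal.zero_ne_top)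
      have hwchain : π.Chain' isWStep := hchain.imp (fun _ _ h => Or.inl h)
      have hbnd := (weak_ub d P T D hD0 hrec π a1 b1 hhead hlast hwchain).2.2.2
      have hmatch : ∀ p ∈ π, P p.1 = T p.2 := by
        intro p hp
        obtain ⟨hp1, hp2, hp3, hp4⟩ := hbnd p hp
        have hDp : D p.1 p.2 = 0 := by
          have := hcells p hp
          rw [hz1] at this
          exact le_bot_iff.mp this
        exact match_of_zero d P T D hd1 hrec hp1 hp3 hDp
      have hcost : ∀ p ∈ π, d (P (min p.1 i)) (T (min p.2 j)) = d (P p.1) (T p.2) := by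
        intro p hp
        obtain ⟨hp1, hp2, hp3, hp4⟩ := hbnd p hp
        have e1 : P (min p.1 i) = P p.1 := by
          rcases le_or_gt p.1 i with h | h
          · rw [Nat.min_eq_left h]
          · rw [Nat.min_eq_right h.le]
            rw [hPc i hipi hijp, hPc p.1 (by omega) (by omega)]
        have e2 : T (min p.2 j) = T p.2 := by
          rcases le_or_gt p.2 j with h | h
          · rw [Nat.min_eq_left h]
          · rw [Nat.min_eq_right h.le]
            rw [hTc j hitj hjjt, hTc p.2 (by omega) (by omega)]
        rw [e1, e2]
      have hDij : D i j ≤ 0 := by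
        have := clamp_path d P T D hD0 hrec π a1 b1 i j hi hj
          (le_max_right _ _) (le_max_right _ _) hhead hlast hwchain hcost
        rw [hsum, hz1] at this
        exact this
      rw [hone] at hDij
      simp at hDij
    -- conclude
    have hlb : 1 ≤ D a b := by
      rcases Dnat d P T D hint hD0 hDi0 hrec (a+b) a b le_rfl with h | ⟨n, hn⟩
      · rw [h]; exact le_top
      · rw [hn]
        rw [hn] at hnz
        have : n ≠ 0 := by
          intro h0; rw [h0] at hnz; simp at hnz
        exact_mod_cast Nat.one_le_iff_ne_zero.2 this
    exact le_antisymm hub hlb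
  · -- mismatch case
    right
    refine ⟨hm, ?_⟩
    have hd1' : 1 ≤ d (P i) (T j) := hd1 _ _ hm
    have hrw := hrec i j hi hj
    set m3 := min (min (D (i-1) (j-1)) (D (i-1) j)) (D i (j-1)) with hm3def
    have hm30 : m3 = 0 := by
      have h1 : m3 + 1 ≤ 0 + 1 := by
        calc m3 + 1 ≤ m3 + d (P i) (T j) := add_le_add_right hd1' m3
        _ = D i j := hrw.symm
        _ = 1 := hone
        _ = 0 + 1 := (zero_add 1).symm
      have := (ENNReal.add_le_add_iff_right ENNReal.one_ne_top).mp h1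
      exact le_bot_iff.mp this
    have hDd : D i j = d (P i) (T j) := by rw [hrw, hm30, zero_add]
    rcases Nat.lt_or_ge i 2 with hi2 | hi2
    · -- i = 1
      have hi1 : i = 1 := by omega
      subst hi1
      refine ⟨[(1, j)], ⟨by simp, ⟨j, hj, by simp⟩, by simp, by simp [List.Chain']⟩, ?_, ?_⟩
      · simp [hDd]
      · intro p hp hpne
        simp at hp
        exact absurd hp hpne
    · -- i ≥ 2 : find a zero predecessor
      have hchoice : (D (i-1) (j-1) = 0 ∧ isStep (i-1, j-1) (i,j)) ∨
          (D (i-1) j = 0 ∧ isStep (i-1, j) (i,j)) ∨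
          (D i (j-1) = 0 ∧ isStep (i, j-1) (i,j)) := by
        rw [hm3def] at hm30
        rcases min_eq_bot.mp hm30 with h | h
        · rcases min_eq_bot.mp h with h' | h'
          · refine Or.inl ⟨h', Or.inr (Or.inr ⟨?_, ?_⟩)⟩
            · show i = (i-1) + 1; omega
            · show j = (j-1) + 1; omega
          · refine Or.inr (Or.inl ⟨h', Or.inl ⟨?_, ?_⟩⟩)
            · show i = (i-1) + 1; omega
            · show j = j; rfl
        · refine Or.inr (Or.inr ⟨h, Or.inr (Or.inl ⟨?_, ?_⟩)⟩)
          · show i = i; rfl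
          · show j = (j-1) + 1; omega
      obtain ⟨x, y, hxy, hstep, hx1⟩ :
          ∃ x y, D x y = 0 ∧ isStep (x, y) (i, j) ∧ 1 ≤ x := by
        rcases hchoice with ⟨h1, h2⟩ | ⟨h1, h2⟩ | ⟨h1, h2⟩
        · exact ⟨i-1, j-1, h1, h2, by omega⟩
        · exact ⟨i-1, j, h1, h2, by omega⟩
        · exact ⟨i, j-1, h1, h2, by omega⟩
      have hy1 : 1 ≤ y := by
        by_contra h
        have hy : y = 0 := by omega
        rw [hy, hDi0 x hx1] at hxy
        exact ENNReal.top_ne_zero hxy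
      obtain ⟨π₀, ⟨hne, hhead, hlast, hchain⟩, hsum, hcells⟩ :=
        exists_path d P T D hD0 hDi0 hrec (x+y) x y le_rfl hx1 hy1
          (by rw [hxy]; exact ENNReal.zero_ne_top)
      have hwchain : π₀.Chain' isWStep := hchain.imp (fun _ _ h => Or.inl h)
      have hbnd := (weak_ub d P T D hD0 hrec π₀ x y hhead hlast hwchain).2.2.2
      refine ⟨π₀ ++ [(i, j)], ⟨by simp, ?_, ?_, ?_⟩, ?_, ?_⟩
      · obtain ⟨j0, hj0, hh⟩ := hhead
        refine ⟨j0, hj0, ?_⟩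
        rw [List.head?_append, hh]; rfl
      · exact List.getLast?_concat
      · rw [List.Chain', List.isChain_append]
        refine ⟨hchain, by simp, ?_⟩
        intro u hu v hv
        simp at hv
        rw [hlast] at hu
        simp at hu
        subst hu hv
        exact hstep
      · rw [List.map_append, List.sum_append]
        simp only [List.map_cons, List.map_nil, List.sum_cons, List.sum_nil, add_zero]
        rw [hsum, hxy, zero_add, hDd]
      · intro p hp hpne
        rw [List.mem_append] at hp
        rcases hp with hp | hp
        · obtain ⟨hp1, hp2, hp3, hp4⟩ := hbnd p hp
          have hDp : D p.1 p.2 = 0 := by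
            have := hcells p hp
            rw [hxy] at this
            exact le_bot_iff.mp this
          exact ⟨hDp, match_of_zero d P T D hd1 hrec hp1 hp3 hDp⟩
        · simp at hp
          exact absurd hp hpne
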